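/- Fix n ≥ 1, positive reals ν₁, …, νₙ, and vectors ψ₁, …, ψₙ ∈ ℝʳ with ∑ᵢ νᵢ⁻¹ ψᵢ = 0. Let Δ = {w ∈ ℝⁿ : wᵢ ≥ 0, ∑ᵢ wᵢ = 1}, W = {w ∈ Δ : ∑ᵢ wᵢ ψᵢ = 0}, and L(w) = ∏ᵢ (n νᵢ wᵢ) / (∑ᵢ νᵢ wᵢ)ⁿ. Then the weight vector ŵ defined by ŵᵢ = νᵢ⁻¹ / (∑ⱼ νⱼ⁻¹) belongs to W, satisfies L(ŵ) = 1, and is the unique maximizer of L over W: for every w ∈ W with w ≠ ŵ, L(w) < L(ŵ). (Corollary 1: the maximum conditional empirical likelihood estimate of the population distribution F⁰ puts mass proportional to 1/νᵢ on the i-th sampled point.) -/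

import Mathlib

open Finset

/-- Strict AM-GM for positive reals that are not all equal. -/
lemma amgm_strict_aux {n : ℕ} (hn : 1 ≤ n) (x : Fin n → ℝ) (hx : ∀ i, 0 < x i)
    (hne : ∃ j k, x j ≠ x k) : ∏ i, x i < ((∑ i, x i) / n) ^ n := by
  have hn0 : (0 : ℝ) < n := by exact_mod_cast hn
  obtain ⟨j, k, hjk⟩ := hne
  have key := strictConcaveOn_log_Ioi.lt_map_sum (t := Finset.univ)
    (w := fun _ : Fin n => (n : ℝ)⁻¹) (p := x)
    (fun i _ => by positivity)
    (by simp [Finset.card_univ]; field_simp)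
    (fun i _ => hx i)
    ⟨j, Finset.mem_univ j, k, Finset.mem_univ k, hjk⟩
  have hsum : ∑ i, (n : ℝ)⁻¹ • x i = (∑ i, x i) / n := by
    rw [← Finset.smul_sum]; simp [smul_eq_mul, div_eq_inv_mul]
  have hlog : ∑ i, (n : ℝ)⁻¹ • Real.log (x i) = (n : ℝ)⁻¹ * Real.log (∏ i, x i) := by
    rw [Real.log_prod (fun i _ => (hx i).ne'), Finset.mul_sum]
    simp [smul_eq_mul]
  rw [hsum, hlog] at key
  have hprod : (0 : ℝ) < ∏ i, x i := Finset.prod_pos fun i _ => hx i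
  have hm : (0 : ℝ) < (∑ i, x i) / n := by
    have : (0 : ℝ) < ∑ i, x i := Finset.sum_pos (fun i _ => hx i) ⟨⟨0, hn⟩, Finset.mem_univ _⟩
    positivity
  have key2 : Real.log (∏ i, x i) < (n : ℝ) * Real.log ((∑ i, x i) / n) := by
    have := mul_lt_mul_of_pos_left key hn0
    rwa [← mul_assoc, mul_inv_cancel₀ hn0.ne', one_mul] at this
  rw [← Real.log_pow] at key2
  exact (Real.log_lt_log_iff hprod (pow_pos hm n)).mp key2

/-- Corollary 1: if `∑ᵢ νᵢ⁻¹ ψᵢ = 0`, the weights `ŵᵢ = νᵢ⁻¹ / ∑ⱼ νⱼ⁻¹` satisfy the model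
constraint, have conditional empirical likelihood `1`, and uniquely maximise the conditional
empirical likelihood over the constrained set `W`. -/
theorem hajek_weights_unique_maximizer
    {n r : ℕ} (hn : 1 ≤ n) (ν : Fin n → ℝ) (hν : ∀ i, 0 < ν i)
    (ψ : Fin n → (Fin r → ℝ)) (hψ : ∑ i, (ν i)⁻¹ • ψ i = 0) :
    ∀ (Δ : Set (Fin n → ℝ)), Δ = {w | (∀ i, 0 ≤ w i) ∧ ∑ i, w i = 1} →
    ∀ (W : Set (Fin n → ℝ)), W = {w ∈ Δ | ∑ i, w i • ψ i = 0} →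
    ∀ (L : (Fin n → ℝ) → ℝ),
      L = (fun w => (∏ i, ((n : ℝ) * ν i * w i)) / (∑ i, ν i * w i) ^ n) →
    ∀ (what : Fin n → ℝ), what = (fun i => (ν i)⁻¹ / ∑ j, (ν j)⁻¹) →
      what ∈ W ∧ L what = 1 ∧ ∀ w ∈ W, w ≠ what → L w < L what := by
  intro Δ hΔ W hW L hL what hwhat
  have hn0 : (0 : ℝ) < n := by exact_mod_cast hn
  set S : ℝ := ∑ j, (ν j)⁻¹ with hS
  have hS0 : 0 < S := Finset.sum_pos (fun i _ => inv_pos.mpr (hν i)) ⟨⟨0, hn⟩, Finset.mem_univ _⟩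
  have hwhat_sum : ∑ i, what i = 1 := by
    rw [hwhat]
    rw [← Finset.sum_div]
    exact div_self hS0.ne'
  have hwhatW : what ∈ W := by
    rw [hW, hΔ]
    refine ⟨⟨fun i => ?_, hwhat_sum⟩, ?_⟩
    · rw [hwhat]; exact div_nonneg (inv_pos.mpr (hν i)).le hS0.le
    · rw [hwhat]
      have : ∀ i, ((ν i)⁻¹ / S) • ψ i = S⁻¹ • ((ν i)⁻¹ • ψ i) := by
        intro i; rw [smul_smul]; ring_nf
      simp_rw [this]
      rw [← Finset.smul_sum, hψ, smul_zero]
  have hLwhat : L what = 1 := by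
    rw [hL, hwhat]
    have h1 : ∀ i, (n : ℝ) * ν i * ((ν i)⁻¹ / S) = n / S := by
      intro i; field_simp
      exact div_self (hν i).ne'
    have h2 : ∀ i, ν i * ((ν i)⁻¹ / S) = 1 / S := by
      intro i; field_simp
      exact div_self (hν i).ne'
    simp only [h1, h2]
    rw [Finset.prod_const, Finset.sum_const, Finset.card_univ, Fintype.card_fin]
    rw [nsmul_eq_mul]
    have : (n : ℝ) * (1 / S) = n / S := by ring
    rw [this]
    exact div_self (pow_ne_zero _ (by positivity))
  refine ⟨hwhatW, hLwhat, ?_⟩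
  intro w hw hwne
  rw [hW, hΔ] at hw
  obtain ⟨⟨hw0, hwsum⟩, -⟩ := hw
  rw [hLwhat]
  by_cases hex : ∃ i, w i = 0
  · obtain ⟨i, hi⟩ := hex
    have hnum : ∏ i, ((n : ℝ) * ν i * w i) = 0 :=
      Finset.prod_eq_zero (Finset.mem_univ i) (by rw [hi, mul_zero])
    rw [hL]
    simp only [hnum, zero_div]
    exact one_pos
  · push_neg at hex
    have hwpos : ∀ i, 0 < w i := fun i => lt_of_le_of_ne (hw0 i) (Ne.symm (hex i))
    set x : Fin n → ℝ := fun i => ν i * w i with hx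
    have hxpos : ∀ i, 0 < x i := fun i => mul_pos (hν i) (hwpos i)
    have hne : ∃ j k, x j ≠ x k := by
      by_contra hcon
      push_neg at hcon
      apply hwne
      -- all x i equal to some c; then w = what
      set c := x ⟨0, hn⟩ with hc
      have hxc : ∀ i, x i = c := fun i => hcon i ⟨0, hn⟩
      have hwc : ∀ i, w i = c * (ν i)⁻¹ := by
        intro i
        have h := hxc i
        simp only [hx] at h
        rw [← h, mul_comm (ν i) (w i), mul_assoc, mul_inv_cancel₀ (hν i).ne', mul_one]
      have hsum : c * S = 1 := by
        rw [hS, Finset.mul_sum, ← hwsum]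
        exact Finset.sum_congr rfl fun i _ => (hwc i).symm
      have hcS : c = S⁻¹ := eq_inv_of_mul_eq_one_right (by rw [mul_comm]; exact hsum)
      funext i
      rw [hwhat, hwc i, hcS]
      show S⁻¹ * (ν i)⁻¹ = (ν i)⁻¹ / S
      rw [div_eq_mul_inv, mul_comm]
    have hamgm := amgm_strict_aux hn x hxpos hne
    have hsx : 0 < ∑ i, x i := Finset.sum_pos (fun i _ => hxpos i) ⟨⟨0, hn⟩, Finset.mem_univ _⟩
    rw [hL]
    simp only
    have hnum : ∏ i, ((n : ℝ) * ν i * w i) = (n : ℝ) ^ n * ∏ i, x i := by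
      have : ∀ i, (n : ℝ) * ν i * w i = (n : ℝ) * x i := fun i => by rw [hx]; ring
      simp_rw [this]
      rw [Finset.prod_mul_distrib, Finset.prod_const, Finset.card_univ, Fintype.card_fin]
    rw [hnum, div_lt_one (by positivity)]
    calc (n : ℝ) ^ n * ∏ i, x i < (n : ℝ) ^ n * ((∑ i, x i) / n) ^ n := by
          exact mul_lt_mul_of_pos_left hamgm (by positivity)
      _ = (∑ i, x i) ^ n := by
          rw [div_pow, mul_div_cancel₀ _ (by positivity)]
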